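/- Assume G_r contains the edge (1,r), m = min{j - i : (i,j) ∈ E(G_r)} ≥ 2, and let U be an independent set of G_n of size at most m - 2. Then for all n ≥ 3r, the complement of the induced subgraph G_n \ N[U] is connected. -/
import Mathlib

/-- `(k,l)` lies in the triangle `Δ((i,j), n-r)` for some edge `(i,j) ∈ E` of `G_r`,
i.e. `0 ≤ k - i ≤ l - j ≤ n - r` (written additively). -/
def triRel (E : Set (ℕ × ℕ)) (r n k l : ℕ) : Prop :=
  ∃ q ∈ E, q.1 ≤ k ∧ k + q.2 ≤ l + q.1 ∧ l + r ≤ n + q.2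

/-- The graph `G_n` of the invariant chain determined by the edge set `E` of `G_r`:
`(k,l)` with `k < l` is an edge of `G_n` iff `(k,l) ∈ Δ((i,j), n-r)` for some `(i,j) ∈ E`. -/
def chainGraph (E : Set (ℕ × ℕ)) (r n : ℕ) : SimpleGraph ℕ :=
  SimpleGraph.fromRel (triRel E r n)

/-- `E` is a set of edges `(i,j)` of a graph `G_r` on `{1,…,r}` with `i < j`. -/
def goodEdges (E : Set (ℕ × ℕ)) (r : ℕ) : Prop :=
  ∀ q ∈ E, 1 ≤ q.1 ∧ q.1 < q.2 ∧ q.2 ≤ r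

/-- The vertex set `G_n \ N[U]`. -/
def chainS (E : Set (ℕ × ℕ)) (r n : ℕ) (U : Finset ℕ) : Set ℕ :=
  Set.Icc 1 n \ {w | ∃ u ∈ U, w = u ∨ (chainGraph E r n).Adj u w}

lemma mem_chainS_iff (E : Set (ℕ × ℕ)) (r n : ℕ) (U : Finset ℕ) (s : ℕ) :
    s ∈ chainS E r n U ↔
      (1 ≤ s ∧ s ≤ n) ∧ ∀ u ∈ U, s ≠ u ∧ ¬(chainGraph E r n).Adj u s := by
  constructor
  · rintro ⟨hIcc, hnot⟩
    refine ⟨Set.mem_Icc.mp hIcc, fun u hu => ⟨fun heq => ?_, fun hadj => ?_⟩⟩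
    · exact hnot ⟨u, hu, Or.inl heq⟩
    · exact hnot ⟨u, hu, Or.inr hadj⟩
  · rintro ⟨hIcc, h⟩
    refine ⟨Set.mem_Icc.mpr hIcc, ?_⟩
    rintro ⟨u, hu, heq | hadj⟩
    · exact (h u hu).1 heq
    · exact (h u hu).2 hadj

lemma chain_adj (E : Set (ℕ × ℕ)) (r n : ℕ) (u v : ℕ) :
    (chainGraph E r n).Adj u v ↔ u ≠ v ∧ (triRel E r n u v ∨ triRel E r n v u) :=
  SimpleGraph.fromRel_adj _ u v

set_option linter.unusedSectionVars false

section Main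

variable (E : Set (ℕ × ℕ)) (r m n : ℕ)
variable (hE : goodEdges E r) (h1r : (1, r) ∈ E)
variable (hm : ∀ q ∈ E, q.1 + m ≤ q.2) (hm2 : 2 ≤ m)
variable (hn : 3 * r ≤ n)
variable (U : Finset ℕ) (hUsub : ↑U ⊆ Set.Icc 1 n)
variable (hind : ∀ u ∈ U, ∀ v ∈ U, ¬ (chainGraph E r n).Adj u v)
variable (hcard : U.card ≤ m - 2)

include hm hm2 in
lemma tri_gap {a b : ℕ} (h : triRel E r n a b) : a + m ≤ b := by
  obtain ⟨q, hq, _, h2, _⟩ := h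
  have := hm q hq
  omega

include hm hm2 in
lemma adj_of_tri {a b : ℕ} (h : triRel E r n a b) : (chainGraph E r n).Adj a b := by
  rw [chain_adj]
  have := tri_gap E r m n hm hm2 h
  exact ⟨by omega, Or.inl h⟩

include hm hm2 in
lemma S_no_tri {s u : ℕ} (hs : s ∈ chainS E r n U) (hu : u ∈ U) :
    ¬ triRel E r n u s ∧ ¬ triRel E r n s u := by
  rw [mem_chainS_iff] at hs
  obtain ⟨_, h⟩ := hs
  obtain ⟨hne, hnadj⟩ := h u hu
  constructor
  · intro ht; exact hnadj (adj_of_tri E r m n hm hm2 ht)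
  · intro ht
    exact hnadj ((adj_of_tri E r m n hm hm2 ht).symm)

include hm hm2 h1r hUsub in
lemma S_near {s u : ℕ} (hs : s ∈ chainS E r n U) (hu : u ∈ U) :
    s + 2 ≤ u + r ∧ u + 2 ≤ s + r := by
  obtain ⟨hnus, hnsu⟩ := S_no_tri E r m n hm hm2 U hs hu
  have hsI : 1 ≤ s ∧ s ≤ n := ((mem_chainS_iff E r n U s).mp hs).1
  have huI : 1 ≤ u ∧ u ≤ n := by
    have := hUsub hu; simpa [Set.mem_Icc] using this
  constructor
  · by_contra hc
    exact hnus ⟨(1, r), h1r, by omega, by omega, by omega⟩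
  · by_contra hc
    exact hnsu ⟨(1, r), h1r, by omega, by omega, by omega⟩

include hm hm2 h1r hUsub hind in
lemma U_near {u v : ℕ} (hu : u ∈ U) (hv : v ∈ U) : u + 2 ≤ v + r := by
  have huI : 1 ≤ u ∧ u ≤ n := by have := hUsub hu; simpa [Set.mem_Icc] using this
  have hvI : 1 ≤ v ∧ v ≤ n := by have := hUsub hv; simpa [Set.mem_Icc] using this
  by_contra hc
  exact hind v hv u hu (adj_of_tri E r m n hm hm2 ⟨(1, r), h1r, by omega, by omega, by omega⟩)

include hE hm hm2 hn h1r hUsub hind hcard in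
lemma consec_lemma (hattain : ∃ q ∈ E, q.2 = q.1 + m)
    {a b : ℕ} (ha : a ∈ chainS E r n U) (hb : b ∈ chainS E r n U) (hab : a < b)
    (hno : ∀ c, a < c → c < b → c ∉ chainS E r n U) : ¬ triRel E r n a b := by
  rintro ⟨⟨i, j⟩, hijE, hia, habj, hbM⟩
  simp only at hia habj hbM
  obtain ⟨⟨i0, j0⟩, hq0E, hq0⟩ := hattain
  simp only at hq0
  have hgij : 1 ≤ i ∧ i < j ∧ j ≤ r := hE _ hijE
  have hij : i + m ≤ j := hm _ hijE
  have hg0 : 1 ≤ i0 ∧ i0 < j0 ∧ j0 ≤ r := hE _ hq0E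
  have h1rm : 1 + m ≤ r := hm _ h1r
  have haI : 1 ≤ a ∧ a ≤ n := ((mem_chainS_iff E r n U a).mp ha).1
  have hbI : 1 ≤ b ∧ b ≤ n := ((mem_chainS_iff E r n U b).mp hb).1
  have hamb : a + m ≤ b := by omega
  -- eaten predicates
  set eatU : ℕ → Prop := fun x => ∃ u ∈ U, triRel E r n x u with heatU
  set eatD : ℕ → Prop := fun x => ∃ u ∈ U, triRel E r n u x with heatD
  -- every x strictly between a and b is in U or eaten
  have heaten : ∀ x, a < x → x < b → x ∉ U → eatD x ∨ eatU x := by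
    intro x hax hxb hxU
    have hxS : x ∉ chainS E r n U := hno x hax hxb
    rw [mem_chainS_iff] at hxS
    push_neg at hxS
    obtain ⟨u, hu, hor⟩ := hxS ⟨by omega, by omega⟩
    by_cases hxe : x = u
    · exact absurd (hxe ▸ hu) hxU
    · have hadj := hor hxe
      rw [chain_adj] at hadj
      rcases hadj.2 with h | h
      · exact Or.inl ⟨u, hu, h⟩
      · exact Or.inr ⟨u, hu, h⟩
  -- eating from above forces the edge to start beyond a
  have hup : ∀ x u q, a < x → u ∈ U → q ∈ E → q.1 ≤ x → x + q.2 ≤ u + q.1 →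
      u + r ≤ n + q.2 → a < q.1 := by
    intro x u q hax hu hqE h1 h2 h3
    by_contra hc
    exact (S_no_tri E r m n hm hm2 U ha hu).2 ⟨q, hqE, by omega, by omega, h3⟩
  -- eating from below forces cap below b
  have hdown : ∀ x u q, x < b → u ∈ U → q ∈ E → q.1 ≤ u → u + q.2 ≤ x + q.1 →
      x + r ≤ n + q.2 → n + q.2 + 1 ≤ b + r := by
    intro x u q hxb hu hqE h1 h2 h3
    by_contra hc
    exact (S_no_tri E r m n hm hm2 U hb hu).1 ⟨q, hqE, h1, by omega, by omega⟩
  -- trichotomy for elements of U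
  have htri : ∀ u ∈ U, u < i ∨ n + j < u + r ∨ (b + i < u + j ∧ u + i < a + j) := by
    intro u hu
    by_cases hlow : u < i
    · exact Or.inl hlow
    by_cases hhigh : n + j < u + r
    · exact Or.inr (Or.inl hhigh)
    right; right
    constructor
    · by_contra hc
      exact (S_no_tri E r m n hm hm2 U hb hu).1 ⟨(i, j), hijE, by omega, by omega, by omega⟩
    · by_contra hc
      exact (S_no_tri E r m n hm hm2 U ha hu).2 ⟨(i, j), hijE, by omega, by omega, by omega⟩
  -- a pigeonhole element
  have hpig : ∃ x, a < x ∧ x < b ∧ x ∉ U := by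
    by_contra hc
    push_neg at hc
    have hsub : Finset.Icc (a + 1) (b - 1) ⊆ U := by
      intro x hx
      rw [Finset.mem_Icc] at hx
      exact hc x (by omega) (by omega)
    have := Finset.card_le_card hsub
    rw [Nat.card_Icc] at this
    omega
  by_cases HU : ∃ x, a < x ∧ x < b ∧ eatU x
  · -- from above-eating: a is small
    have hasmall : a + m + 1 ≤ r := by
      obtain ⟨x, hax, hxb, u, hu, q, hqE, h1, h2, h3⟩ := HU
      have := hup x u q hax hu hqE h1 h2 h3
      have := hm q hqE
      have := hE q hqE
      omega
    by_cases HD : ∃ x, a < x ∧ x < b ∧ eatD x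
    · -- Case 1 : both directions of eating occur
      have hbbig : 2 * r + m + 2 ≤ b := by
        obtain ⟨x, hax, hxb, u, hu, q, hqE, h1, h2, h3⟩ := HD
        have := hdown x u q hxb hu hqE h1 h2 h3
        have := hm q hqE
        have := hE q hqE
        omega
      -- all elements of U are "middle"
      have hmid : ∀ u ∈ U, b + i < u + j ∧ u + i < a + j := by
        intro u hu
        rcases htri u hu with h | h | h
        · -- low impossible
          have := (S_near E r m n h1r hm hm2 U hUsub hb hu).1
          omega
        · -- high impossible
          have := (S_near E r m n h1r hm hm2 U hUsub ha hu).2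
          omega
        · exact h
      -- U is nonempty
      obtain ⟨x₁, hax₁, hx₁b, u₁, hu₁, _⟩ := HU
      have hUne : U.Nonempty := ⟨u₁, hu₁⟩
      set p := U.min' hUne with hp
      set t := U.max' hUne with ht
      have hpU : p ∈ U := U.min'_mem hUne
      have htU : t ∈ U := U.max'_mem hUne
      have hpt : p ≤ t := U.min'_le t htU
      -- all u are in a narrow high band; any gap ≥ m yields adjacency via (i0,j0)
      have hdiam : ¬ (p + m ≤ t) := by
        intro hc
        have hpm := hmid p hpU
        have htm := hmid t htU
        refine hind p hpU t htU (adj_of_tri E r m n hm hm2 ⟨(i0, j0), hq0E, ?_, ?_, ?_⟩) <;>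
          simp only <;> omega
      have hpa : a + 1 ≤ p := by have := hmid p hpU; omega
      have htb : t + 1 ≤ b := by have := hmid t htU; omega
      -- window of m-1 consecutive integers inside U
      have hsub : Finset.Icc (max (a + 1) (t + 1 - m)) (min (b - 1) (p + m - 1)) ⊆ U := by
        intro x hx
        rw [Finset.mem_Icc] at hx
        by_contra hxU
        rcases heaten x (by omega) (by omega) hxU with ⟨u, hu, hT⟩ | ⟨u, hu, hT⟩
        · -- eatD : u + m ≤ x, but u ≥ p and x ≤ p + m - 1
          have h1 := tri_gap E r m n hm hm2 hT
          have h2 := U.min'_le u hu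
          omega
        · -- eatU : x + m ≤ u, but u ≤ t and x ≥ t + 1 - m
          have h1 := tri_gap E r m n hm hm2 hT
          have h2 := U.le_max' u hu
          omega
      have := Finset.card_le_card hsub
      rw [Nat.card_Icc] at this
      omega
    · -- Case 2 : only above-eating
      push_neg at HD
      -- no high u
      have hnohigh : ∀ u ∈ U, ¬ (n + j < u + r) := by
        intro u hu hc
        have := (S_near E r m n h1r hm hm2 U hUsub ha hu).2
        omega
      have hsub : Finset.Icc (b + 1 - m) (b - 1) ⊆ U := by
        intro x hx
        rw [Finset.mem_Icc] at hx
        by_contra hxU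
        rcases heaten x (by omega) (by omega) hxU with ⟨u, hu, hT⟩ | ⟨u, hu, hT⟩
        · exact HD x (by omega) (by omega) ⟨u, hu, hT⟩
        · -- eater from above : x + m ≤ u ; u is low, middle or high, all impossible
          have h1 := tri_gap E r m n hm hm2 hT
          rcases htri u hu with h | h | h
          · -- low: u < i ≤ a < x ≤ u - m
            omega
          · exact hnohigh u hu h
          · -- middle : u < a + j - i ≤ b, but u ≥ x + m ≥ b + 1
            omega
      have := Finset.card_le_card hsub
      rw [Nat.card_Icc] at this
      omega
  · -- Case 3 : only below-eating
    push_neg at HU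
    obtain ⟨x₀, hax₀, hx₀b, hx₀U⟩ := hpig
    have HD : eatD x₀ := by
      rcases heaten x₀ hax₀ hx₀b hx₀U with h | h
      · exact h
      · exact absurd h (HU x₀ hax₀ hx₀b)
    have hbbig : 2 * r + m + 2 ≤ b := by
      obtain ⟨u, hu, q, hqE, h1, h2, h3⟩ := HD
      have := hdown x₀ u q hx₀b hu hqE h1 h2 h3
      have := hm q hqE
      have := hE q hqE
      omega
    -- no low u
    have hnolow : ∀ u ∈ U, ¬ (u < i) := by
      intro u hu hc
      have := (S_near E r m n h1r hm hm2 U hUsub hb hu).1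
      omega
    have hsub : Finset.Icc (a + 1) (a + m - 1) ⊆ U := by
      intro x hx
      rw [Finset.mem_Icc] at hx
      by_contra hxU
      rcases heaten x (by omega) (by omega) hxU with ⟨u, hu, hT⟩ | ⟨u, hu, hT⟩
      · -- eater from below : u + m ≤ x
        have h1 := tri_gap E r m n hm hm2 hT
        rcases htri u hu with h | h | h
        · exact hnolow u hu h
        · -- high : u > n + j - r ≥ b > x > u
          omega
        · -- middle : u + j > b + i ≥ a + j, so u > a ; but u ≤ x - m ≤ a - 1
          omega
      · exact HU x (by omega) (by omega) ⟨u, hu, hT⟩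
    have := Finset.card_le_card hsub
    rw [Nat.card_Icc] at this
    omega

include hE hm hm2 hn h1r hUsub hind hcard in
lemma chainS_nonempty (hattain : ∃ q ∈ E, q.2 = q.1 + m) :
    ∃ s, s ∈ chainS E r n U := by
  obtain ⟨⟨i0, j0⟩, hq0E, hq0⟩ := hattain
  simp only at hq0
  have hg0 : 1 ≤ i0 ∧ i0 < j0 ∧ j0 ≤ r := hE _ hq0E
  have h1rm : 1 + m ≤ r := hm _ h1r
  by_contra hc
  push_neg at hc
  rcases Finset.eq_empty_or_nonempty U with hUe | hUne
  · refine hc 1 ?_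
    rw [mem_chainS_iff]
    exact ⟨⟨le_refl 1, by omega⟩, by simp [hUe]⟩
  set eatU : ℕ → Prop := fun x => ∃ u ∈ U, triRel E r n x u with heatU
  set eatD : ℕ → Prop := fun x => ∃ u ∈ U, triRel E r n u x with heatD
  have heaten : ∀ x, 1 ≤ x → x ≤ n → x ∉ U → eatD x ∨ eatU x := by
    intro x h1 h2 hxU
    have hxS := hc x
    rw [mem_chainS_iff] at hxS
    push_neg at hxS
    obtain ⟨u, hu, hor⟩ := hxS ⟨h1, h2⟩
    by_cases hxe : x = u
    · exact absurd (hxe ▸ hu) hxU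
    · have hadj := hor hxe
      rw [chain_adj] at hadj
      rcases hadj.2 with h | h
      · exact Or.inl ⟨u, hu, h⟩
      · exact Or.inr ⟨u, hu, h⟩
  set p := U.min' hUne with hp
  set t := U.max' hUne with ht
  have hpU : p ∈ U := U.min'_mem hUne
  have htU : t ∈ U := U.max'_mem hUne
  have hpt : p ≤ t := U.min'_le t htU
  have hpI : 1 ≤ p ∧ p ≤ n := by have := hUsub hpU; simpa [Set.mem_Icc] using this
  have htI : 1 ≤ t ∧ t ≤ n := by have := hUsub htU; simpa [Set.mem_Icc] using this
  -- eating from above at x ≥ p forces p small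
  have hup : ∀ x, p ≤ x → eatU x → p + m + 1 ≤ r := by
    rintro x hpx ⟨u, hu, q, hqE, h1, h2, h3⟩
    have hq := hm q hqE
    have hqg := hE q hqE
    by_cases hcc : q.1 ≤ p
    · exfalso
      exact hind p hpU u hu (adj_of_tri E r m n hm hm2 ⟨q, hqE, hcc, by omega, h3⟩)
    · omega
  -- eating from below at x ≤ t forces t large
  have hdown : ∀ x, x ≤ t → eatD x → 2 * r + m + 2 ≤ t := by
    rintro x hxt ⟨u, hu, q, hqE, h1, h2, h3⟩
    have hq := hm q hqE
    have hqg := hE q hqE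
    by_cases hcc : t + r ≤ n + q.2
    · exfalso
      exact hind u hu t htU (adj_of_tri E r m n hm hm2 ⟨q, hqE, h1, by omega, hcc⟩)
    · omega
  by_cases hdiam : p + m ≤ t
  · -- a pigeonhole element strictly between p and t
    have hpig : ∃ x, p < x ∧ x < t ∧ x ∉ U := by
      by_contra hcc
      push_neg at hcc
      have hsub : Finset.Icc (p + 1) (t - 1) ⊆ U := by
        intro x hx
        rw [Finset.mem_Icc] at hx
        exact hcc x (by omega) (by omega)
      have := Finset.card_le_card hsub
      rw [Nat.card_Icc] at this
      omega
    obtain ⟨x, hpx, hxt, hxU⟩ := hpig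
    have hkey : p + m + 1 ≤ r ∨ 2 * r + m + 2 ≤ t := by
      rcases heaten x (by omega) (by omega) hxU with h | h
      · exact Or.inr (hdown x (by omega) h)
      · exact Or.inl (hup x (by omega) h)
    rcases hkey with hsmall | hbig
    · -- all of U is low ; window just below t is uneaten
      have htsmall : t + 2 ≤ p + r := U_near E r m n h1r hm hm2 U hUsub hind htU hpU
      have hsub : Finset.Icc (max 1 (t + 1 - m)) t ⊆ U := by
        intro x hx
        rw [Finset.mem_Icc] at hx
        by_contra hxU
        rcases heaten x (by omega) (by omega) hxU with ⟨u, hu, hT⟩ | ⟨u, hu, hT⟩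
        · have := hdown x hx.2 ⟨u, hu, hT⟩
          omega
        · have h1 := tri_gap E r m n hm hm2 hT
          have h2 := U.le_max' u hu
          omega
      have := Finset.card_le_card hsub
      rw [Nat.card_Icc] at this
      omega
    · -- all of U is high ; window just above p is uneaten
      have hpbig : t + 2 ≤ p + r := U_near E r m n h1r hm hm2 U hUsub hind htU hpU
      have hsub : Finset.Icc p (min n (p + m - 1)) ⊆ U := by
        intro x hx
        rw [Finset.mem_Icc] at hx
        by_contra hxU
        rcases heaten x (by omega) (by omega) hxU with ⟨u, hu, hT⟩ | ⟨u, hu, hT⟩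
        · have h1 := tri_gap E r m n hm hm2 hT
          have h2 := U.min'_le u hu
          omega
        · have := hup x hx.1 ⟨u, hu, hT⟩
          omega
      have := Finset.card_le_card hsub
      rw [Nat.card_Icc] at this
      omega
  · -- U has diameter < m : a whole window of m integers survives
    have hsub : Finset.Icc (max 1 (t + 1 - m)) (min n (p + m - 1)) ⊆ U := by
      intro x hx
      rw [Finset.mem_Icc] at hx
      by_contra hxU
      rcases heaten x (by omega) (by omega) hxU with ⟨u, hu, hT⟩ | ⟨u, hu, hT⟩
      · have h1 := tri_gap E r m n hm hm2 hT
        have h2 := U.min'_le u hu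
        omega
      · have h1 := tri_gap E r m n hm hm2 hT
        have h2 := U.le_max' u hu
        omega
    have := Finset.card_le_card hsub
    rw [Nat.card_Icc] at this
    omega

end Main

/-- Assume `(1,r) ∈ E(G_r)`, the sparsity index is `m ≥ 2`, and `U` is an independent set
of `G_n` of size at most `m - 2`. Then for all `n ≥ 3r`, the complement of the induced
subgraph `G_n \ N[U]` is connected. -/
theorem complement_minus_closed_neighborhood_connected (E : Set (ℕ × ℕ)) (r m n : ℕ)
    (hE : goodEdges E r) (h1r : (1, r) ∈ E)
    (hm : ∀ q ∈ E, q.1 + m ≤ q.2) (hattain : ∃ q ∈ E, q.2 = q.1 + m) (hm2 : 2 ≤ m)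
    (hn : 3 * r ≤ n) (U : Finset ℕ) (hUsub : ↑U ⊆ Set.Icc 1 n)
    (hind : ∀ u ∈ U, ∀ v ∈ U, ¬ (chainGraph E r n).Adj u v)
    (hcard : U.card ≤ m - 2) :
    (((chainGraph E r n)ᶜ).induce
      (Set.Icc 1 n \ {w | ∃ u ∈ U, w = u ∨ (chainGraph E r n).Adj u w})).Connected := by
  classical
  have hSdef : (Set.Icc 1 n \ {w | ∃ u ∈ U, w = u ∨ (chainGraph E r n).Adj u w})
      = chainS E r n U := rfl
  rw [hSdef]
  set G' := ((chainGraph E r n)ᶜ).induce (chainS E r n U) with hG'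
  rw [SimpleGraph.connected_iff]
  obtain ⟨s₀, hs₀⟩ := chainS_nonempty E r m n hE h1r hm hm2 hn U hUsub hind hcard hattain
  refine ⟨?_, ⟨⟨s₀, hs₀⟩⟩⟩
  -- key step : reachability by distance induction
  have key : ∀ d : ℕ, ∀ x y (hx : x ∈ chainS E r n U) (hy : y ∈ chainS E r n U),
      x < y → y = x + d → G'.Reachable ⟨x, hx⟩ ⟨y, hy⟩ := by
    intro d
    induction d using Nat.strong_induction_on with
    | _ d ih =>
      intro x y hx hy hxy hd
      by_cases hmid : ∃ c, x < c ∧ c < y ∧ c ∈ chainS E r n U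
      · obtain ⟨c, hxc, hcy, hcS⟩ := hmid
        have h1 : G'.Reachable ⟨x, hx⟩ ⟨c, hcS⟩ :=
          ih (c - x) (by omega) x c hx hcS hxc (by omega)
        have h2 : G'.Reachable ⟨c, hcS⟩ ⟨y, hy⟩ :=
          ih (y - c) (by omega) c y hcS hy hcy (by omega)
        exact h1.trans h2
      · push_neg at hmid
        have hnoT : ¬ triRel E r n x y :=
          consec_lemma E r m n hE h1r hm hm2 hn U hUsub hind hcard hattain hx hy hxy
            (fun c h1 h2 => hmid c h1 h2)
        have hnoT' : ¬ triRel E r n y x := by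
          intro hT
          have := tri_gap E r m n hm hm2 hT
          omega
        have hadj : G'.Adj ⟨x, hx⟩ ⟨y, hy⟩ := by
          show ((chainGraph E r n)ᶜ).Adj x y
          rw [SimpleGraph.compl_adj]
          refine ⟨by omega, ?_⟩
          rw [chain_adj]
          tauto
        exact hadj.reachable
  rintro ⟨x, hx⟩ ⟨y, hy⟩
  rcases lt_trichotomy x y with h | h | h
  · exact key (y - x) x y hx hy h (by omega)
  · subst h; rfl
  · exact (key (x - y) y x hy hx h (by omega)).symm
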